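/- arXiv:2511.01604 — 4 statements merged into one kernel-verified Lean document; each statement's English description precedes it below -/
import Mathlib

section
/- Let q be a prime power, F = GF(q^2). The set Ω' = {(b, c) ∈ F × F : b + b^q + c·c^q = 0 and b + b^q ≠ 0} has exactly q(q^2 − 1) elements. -/
open Polynomial Finset

/-- The set of roots of `X^q + a X` in a field has at most `q` elements (for `q ≥ 2`). -/
lemma aux_card_roots_le {F : Type*} [Field F] [Fintype F] [DecidableEq F]
    (q : ℕ) (hq : 2 ≤ q) (a : F) :
    (Finset.univ.filter (fun x : F => x ^ q + a * x = 0)).card ≤ q := by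
  set P : F[X] := X ^ q + C a * X with hP
  have hdegX : (C a * X : F[X]).degree < (X ^ q : F[X]).degree := by
    rw [degree_X_pow]
    exact lt_of_le_of_lt (degree_C_mul_X_le _) (by exact_mod_cast hq)
  have hdeg : P.degree = q := by
    rw [hP, degree_add_eq_left_of_degree_lt hdegX, degree_X_pow]
  have hP0 : P ≠ 0 := by
    intro h
    rw [h, degree_zero] at hdeg
    exact absurd hdeg (by simp)
  have hnd : P.natDegree = q := natDegree_eq_of_degree_eq_some hdeg
  calc (Finset.univ.filter (fun x : F => x ^ q + a * x = 0)).card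
      ≤ P.natDegree := by
        apply card_le_degree_of_subset_roots
        intro x hx
        simp only [Finset.mem_val, Finset.mem_filter] at hx
        rw [mem_roots hP0]
        simp [P, IsRoot, hx.2]
    _ = q := hnd

/-- The set `Ω' = {(b, c) : b + b^q + c c^q = 0 and b + b^q ≠ 0}` in
`GF(q^2) × GF(q^2)` has exactly `q(q^2 - 1)` elements. -/
theorem card_Omega_prime (q : ℕ) (hq : IsPrimePow q)
    (F : Type*) [Field F] [Fintype F] (hF : Fintype.card F = q ^ 2) :
    Nat.card {p : F × F //
        p.1 + p.1 ^ q + p.2 * p.2 ^ q = 0 ∧ p.1 + p.1 ^ q ≠ 0} =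
      q * (q ^ 2 - 1) := by
  classical
  obtain ⟨p, k, hpp, hk, rfl⟩ := hq
  have hp : p.Prime := Nat.prime_iff.mpr hpp
  set q := p ^ k with hqdef
  have hq2 : 2 ≤ q := Nat.one_lt_pow hk.ne' hp.one_lt
  -- characteristic
  haveI hcharP : CharP F p := by
    haveI hc := ringChar.charP F
    have hprime : (ringChar F).Prime := CharP.char_is_prime F (ringChar F)
    obtain ⟨n, -, hcard⟩ := FiniteField.card F (ringChar F)
    have hdvd : ringChar F ∣ p ^ (k * 2) := by
      have h1 : ringChar F ^ (n : ℕ) = p ^ (k * 2) := by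
        rw [← hcard, hF, hqdef, ← pow_mul]
      exact h1 ▸ dvd_pow_self (ringChar F) n.pos.ne'
    have heq : ringChar F = p :=
      (Nat.prime_dvd_prime_iff_eq hprime hp).mp (hprime.dvd_of_dvd_pow hdvd)
    rwa [heq] at hc
  haveI : Fact p.Prime := ⟨hp⟩
  set φ : F →+* F := iterateFrobenius F p k with hφdef
  have hφ : ∀ x : F, φ x = x ^ q := fun x => iterateFrobenius_def p k x
  have hpow : ∀ b : F, (b ^ q) ^ q = b := by
    intro b
    rw [← pow_mul, ← pow_two, ← hF, FiniteField.pow_card]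
  set T : F → F := fun b => b + b ^ q with hT
  set Fib : F → Finset F := fun t => Finset.univ.filter (fun b => T b = t) with hFibdef
  set K := (Fib 0).card with hK
  -- every nonempty fiber has size K
  have hfib : ∀ t ∈ Finset.univ.image T, (Fib t).card = K := by
    intro t ht
    obtain ⟨b0, -, hb0⟩ := Finset.mem_image.mp ht
    rw [hK]
    apply Finset.card_nbij' (fun b => b - b0) (fun b => b + b0)
    · intro b hb
      simp only [hFibdef, Finset.mem_coe, Finset.mem_filter, Finset.mem_univ, true_and] at hb ⊢
      have hsub : (b - b0) ^ q = b ^ q - b0 ^ q := by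
        rw [← hφ, ← hφ, ← hφ, map_sub]
      simp only [hT] at hb ⊢
      have hb0' : b0 + b0 ^ q = t := hb0
      rw [hsub]
      linear_combination hb - hb0'
    · intro b hb
      simp only [hFibdef, Finset.mem_coe, Finset.mem_filter, Finset.mem_univ, true_and] at hb ⊢
      have hadd : (b + b0) ^ q = b ^ q + b0 ^ q := by
        rw [← hφ, ← hφ, ← hφ, map_add]
      simp only [hT] at hb ⊢
      have hb0' : b0 + b0 ^ q = t := hb0
      rw [hadd]
      linear_combination hb + hb0'
    · intro b _; ring
    · intro b _; ring
  -- total count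
  have htotal : (Finset.univ.image T).card * K = q ^ 2 := by
    have h1 : (Finset.univ : Finset F).card = ∑ t ∈ Finset.univ.image T, (Fib t).card :=
      Finset.card_eq_sum_card_fiberwise
        (fun b _ => Finset.mem_image_of_mem T (Finset.mem_univ b))
    rw [Finset.sum_congr rfl hfib, Finset.sum_const, smul_eq_mul] at h1
    rw [← h1, Finset.card_univ, hF]
  -- bounds
  have hKle : K ≤ q := by
    have hle := aux_card_roots_le q hq2 (1 : F)
    have heq : Fib 0 = Finset.univ.filter (fun x : F => x ^ q + (1 : F) * x = 0) := by
      apply Finset.filter_congr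
      intro b _
      simp only [hT, one_mul]
      rw [add_comm (b ^ q) b]
    rw [hK, heq]
    exact hle
  have himsub : Finset.univ.image T ⊆
      Finset.univ.filter (fun x : F => x ^ q + (-1 : F) * x = 0) := by
    intro t ht
    obtain ⟨b, -, rfl⟩ := Finset.mem_image.mp ht
    simp only [Finset.mem_filter, Finset.mem_univ, true_and]
    have hadd : (b + b ^ q) ^ q = b ^ q + b := by
      rw [← hφ, map_add, hφ, hφ, hpow]
    simp only [hT]
    rw [hadd]
    ring
  have hIle : (Finset.univ.image T).card ≤ q :=
    le_trans (Finset.card_le_card himsub) (aux_card_roots_le q hq2 (-1 : F))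
  have hq0 : 0 < q := lt_of_lt_of_le (by norm_num) hq2
  have hKq : K = q := by nlinarith
  have hIq : (Finset.univ.image T).card = q := by nlinarith
  have himeq : Finset.univ.image T =
      Finset.univ.filter (fun x : F => x ^ q + (-1 : F) * x = 0) :=
    Finset.eq_of_subset_of_card_le himsub
      (by rw [hIq]; exact aux_card_roots_le q hq2 (-1 : F))
  have hfibq : ∀ t : F, t ^ q = t → (Fib t).card = q := by
    intro t ht
    have hmem : t ∈ Finset.univ.image T := by
      rw [himeq]
      simp only [Finset.mem_filter, Finset.mem_univ, true_and]
      rw [ht]; ring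
    rw [hfib t hmem, hKq]
  -- main count
  rw [Nat.card_eq_fintype_card, Fintype.card_subtype]
  rw [Finset.card_eq_sum_card_fiberwise
    (f := Prod.snd) (t := (Finset.univ : Finset F)) (fun x _ => Finset.mem_univ x.2)]
  have hcfiber : ∀ c : F,
      ((Finset.univ.filter (fun pp : F × F =>
          pp.1 + pp.1 ^ q + pp.2 * pp.2 ^ q = 0 ∧ pp.1 + pp.1 ^ q ≠ 0)).filter
        (fun pp => pp.2 = c)).card = if c = 0 then 0 else q := by
    intro c
    have hbij : ((Finset.univ.filter (fun pp : F × F =>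
          pp.1 + pp.1 ^ q + pp.2 * pp.2 ^ q = 0 ∧ pp.1 + pp.1 ^ q ≠ 0)).filter
        (fun pp => pp.2 = c)).card =
        (Finset.univ.filter (fun b : F =>
          b + b ^ q + c * c ^ q = 0 ∧ b + b ^ q ≠ 0)).card := by
      apply Finset.card_nbij' Prod.fst (fun b => (b, c))
      · intro a ha
        simp only [Finset.mem_coe, Finset.mem_filter, Finset.mem_univ, true_and] at ha ⊢
        obtain ⟨⟨h1, h2⟩, h3⟩ := ha
        rw [← h3]
        exact ⟨h1, h2⟩
      · intro b hb
        simp only [Finset.mem_coe, Finset.mem_filter, Finset.mem_univ, true_and] at hb ⊢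
        exact ⟨hb, trivial⟩
      · intro a ha
        simp only [Finset.mem_coe, Finset.mem_filter] at ha
        exact Prod.ext rfl ha.2.symm
      · intro b _; rfl
    rw [hbij]
    by_cases hc : c = 0
    · subst hc
      rw [if_pos rfl]
      rw [Finset.card_eq_zero, Finset.filter_eq_empty_iff]
      intro b _
      rintro ⟨h1, h2⟩
      apply h2
      simpa using h1
    · rw [if_neg hc]
      have hN : c * c ^ q ≠ 0 := mul_ne_zero hc (pow_ne_zero _ hc)
      have hNfix : (-(c * c ^ q)) ^ q = -(c * c ^ q) := by
        rw [← hφ, map_neg, map_mul, hφ, hφ, hpow]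
        ring
      have heq : Finset.univ.filter (fun b : F =>
            b + b ^ q + c * c ^ q = 0 ∧ b + b ^ q ≠ 0) = Fib (-(c * c ^ q)) := by
        apply Finset.filter_congr
        intro b _
        simp only [hT]
        constructor
        · rintro ⟨h1, -⟩
          linear_combination h1
        · intro h
          constructor
          · linear_combination h
          · rw [h]
            exact neg_ne_zero.mpr hN
      rw [heq, hfibq _ hNfix]
  rw [Finset.sum_congr rfl (fun c _ => hcfiber c)]
  rw [Finset.sum_ite, Finset.sum_const_zero, Finset.sum_const, smul_eq_mul, zero_add]
  have hcardne : (Finset.univ.filter (fun c : F => ¬c = 0)).card = q ^ 2 - 1 := by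
    have h0 : (Finset.univ.filter (fun c : F => c = 0)) = {0} := by ext x; simp
    rw [Finset.filter_not, h0, Finset.card_sdiff_of_subset (by simp), Finset.card_univ, hF,
      Finset.card_singleton]
  rw [hcardne, Nat.mul_comm]
end

section
/- Let q be a prime power, F = GF(q^2), F_0 = GF(q). Suppose a, b ∈ F^× with a + a^q = 0, b + b^q ≠ 0, and let y ∈ F_0^× with y ≠ 1. If both b(b^q + a)/a ∈ F_0 and (by)((by)^q + a)/a ∈ F_0 (up to a common unit factor, i.e., their ratio y·(a + b^q·y)/(b^q + a) lies in F_0^×), then a contradiction follows; in other words, the ratio y^{-1}(b^q + a)(a + b^q y)^{-1} cannot lie in F_0^×. -/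
/-- If `a + a^q = 0`, `b + b^q ≠ 0`, and `y ∈ F_0^×` with `y ≠ 1`, then the
ratio `y⁻¹ (b^q + a)(a + b^q y)⁻¹` does not lie in `F_0^×`. -/
theorem ratio_not_in_F0 (q : ℕ) (hq : IsPrimePow q)
    (F : Type*) [Field F] [Fintype F] (hF : Fintype.card F = q ^ 2)
    (a b y : F) (ha0 : a ≠ 0) (ha : a + a ^ q = 0)
    (hb0 : b ≠ 0) (hb : b + b ^ q ≠ 0)
    (hy0 : y ≠ 0) (hyF0 : y ^ q = y) (hy1 : y ≠ 1) :
    ¬ (y⁻¹ * (b ^ q + a) * (a + b ^ q * y)⁻¹ ≠ 0 ∧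
       (y⁻¹ * (b ^ q + a) * (a + b ^ q * y)⁻¹) ^ q =
         y⁻¹ * (b ^ q + a) * (a + b ^ q * y)⁻¹) := by
  rintro ⟨hz0, hz⟩
  obtain ⟨p, n, hp, hn, rfl⟩ := hq
  replace hp := hp.nat_prime
  haveI : Fact p.Prime := ⟨hp⟩
  set q := p ^ n with hqdef
  -- characteristic is p
  obtain ⟨p', hp'⟩ := CharP.exists F
  haveI := hp'
  obtain ⟨m, hp'prime, hcard⟩ := FiniteField.card F p'
  have hpp' : p' = p := by
    have hdvd : p' ∣ p ^ (n * 2) := by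
      rw [pow_mul, ← hF, hcard]
      exact dvd_pow_self p' m.2.ne'
    exact (Nat.prime_dvd_prime_iff_eq hp'prime hp).mp
      (hp'prime.dvd_of_dvd_pow hdvd)
  subst hpp'
  have hfrob : ∀ u v : F, (u + v) ^ q = u ^ q + v ^ q := fun u v =>
    add_pow_char_pow u v p' n
  have hqq : ∀ x : F, (x ^ q) ^ q = x := by
    intro x
    rw [← pow_mul, ← pow_two, ← hF, FiniteField.pow_card]
  have haq : a ^ q = -a := by
    have := eq_neg_of_add_eq_zero_right ha
    linear_combination this
  -- nonvanishing facts
  have h1 : b ^ q + a ≠ 0 := by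
    intro h; apply hz0; rw [h]; ring
  have h2 : a + b ^ q * y ≠ 0 := by
    intro h; apply hz0; rw [h, inv_zero]; ring
  have hkey : y⁻¹ * (b - a) * (b * y - a)⁻¹ =
      y⁻¹ * (b ^ q + a) * (a + b ^ q * y)⁻¹ := by
    rw [← hz, mul_pow, mul_pow, inv_pow, inv_pow, hfrob, hfrob, hyF0, hqq,
      haq, mul_pow, hqq, hyF0]
    ring_nf
  have h3 : b * y - a ≠ 0 := by
    intro h
    apply hz0
    rw [← hkey, h, inv_zero]; ring
  have hy1' : y - 1 ≠ 0 := sub_ne_zero.mpr hy1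
  apply hb
  have h4 : y * ((y - 1) * (a * (b + b ^ q))) = 0 := by
    have := hkey
    field_simp at this
    rw [div_eq_div_iff (by rw [mul_comm y]; exact h3) (by rw [mul_comm y]; exact h2)] at this
    linear_combination -y * this
  have h5 := (mul_eq_zero.mp h4).resolve_left hy0
  have h6 := (mul_eq_zero.mp h5).resolve_left hy1'
  exact (mul_eq_zero.mp h6).resolve_left ha0
end

section
/- Let q be a prime power, F = GF(q^2), F_0 = GF(q). Define an equivalence on the set Ω' = {(b,c) ∈ F × F : b + b^q + c·c^q = 0 ≠ b + b^q} by (b, c) ∼ (b_1, c_1) iff b F_0^× = b_1 F_0^×. Then each equivalence class has exactly q^2 − 1 elements, and there are exactly q classes. -/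
open Polynomial

namespace OmegaAux

set_option linter.unusedSectionVars false
set_option maxHeartbeats 1000000

variable {F : Type*} [Field F] [Fintype F] {q : ℕ}

lemma card_pow_eq {n : ℕ} (hn : 0 < n) {ζ a : F} (hζ : IsPrimitiveRoot ζ n)
    (ha : a ≠ 0) (hex : ∃ x : F, x ^ n = a) :
    Nat.card {x : F // x ^ n = a} = n := by
  classical
  have hset : {x : F | x ^ n = a} = ((nthRoots n a).toFinset : Set F) := by
    ext x
    simp [Multiset.mem_toFinset, mem_nthRoots hn]
  have h1 : Nat.card {x : F // x ^ n = a} = Set.ncard {x : F | x ^ n = a} :=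
    Nat.card_coe_set_eq _
  rw [h1, hset, Set.ncard_coe_finset,
    Multiset.toFinset_card_of_nodup (hζ.nthRoots_nodup ha), hζ.card_nthRoots, if_pos hex]

lemma sq_sub_one (hq : 2 ≤ q) : q ^ 2 - 1 = (q + 1) * (q - 1) := by
  cases' Nat.exists_eq_add_of_le hq with r hr
  subst hr
  have h1 : 2 + r - 1 = r + 1 := by omega
  rw [h1]
  have h2 : (2 + r) ^ 2 = r ^ 2 + 4 * r + 4 := by ring
  have h3 : (2 + r + 1) * (r + 1) = r ^ 2 + 4 * r + 3 := by ring
  omega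

lemma sq_sub_one_pos (hq : 2 ≤ q) : 0 < q ^ 2 - 1 := by
  have h := sq_sub_one hq
  have : 0 < (q + 1) * (q - 1) := Nat.mul_pos (by omega) (by omega)
  omega

lemma gen_orderOf (hcard : Fintype.card F = q ^ 2)
    {g : Fˣ} (hg : ∀ x : Fˣ, x ∈ Subgroup.zpowers g) :
    orderOf (g : F) = q ^ 2 - 1 := by
  rw [orderOf_units, orderOf_eq_card_of_forall_mem_zpowers hg, Nat.card_units,
    Nat.card_eq_fintype_card, hcard]

lemma gen_prim (hcard : Fintype.card F = q ^ 2)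
    {g : Fˣ} (hg : ∀ x : Fˣ, x ∈ Subgroup.zpowers g) :
    IsPrimitiveRoot (g : F) (q ^ 2 - 1) :=
  gen_orderOf hcard hg ▸ IsPrimitiveRoot.orderOf (g : F)

lemma exists_pow_gen {g : Fˣ} (hg : ∀ x : Fˣ, x ∈ Subgroup.zpowers g)
    {a : F} (ha : a ≠ 0) : ∃ m : ℕ, (g : F) ^ m = a := by
  obtain ⟨m, hm⟩ := mem_powers_iff_mem_zpowers.mpr (hg (Units.mk0 a ha))
  have hm' : g ^ m = Units.mk0 a ha := hm
  exact ⟨m, by rw [← Units.val_pow_eq_pow_val, hm', Units.val_mk0]⟩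

lemma pow_fix_iff (hq : 2 ≤ q) {a : F} (ha : a ≠ 0) :
    a ^ q = a ↔ a ^ (q - 1) = 1 := by
  have hq1 : q - 1 + 1 = q := by omega
  constructor
  · intro h
    have h2 : a ^ (q - 1) * a = 1 * a := by
      rw [one_mul, ← pow_succ, hq1, h]
    exact mul_right_cancel₀ ha h2
  · intro h
    calc a ^ q = a ^ (q - 1) * a := by rw [← pow_succ, hq1]
    _ = a := by rw [h, one_mul]

lemma exists_norm (hq : 2 ≤ q) (hcard : Fintype.card F = q ^ 2)
    {g : Fˣ} (hg : ∀ x : Fˣ, x ∈ Subgroup.zpowers g)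
    {a : F} (ha : a ≠ 0) (haq : a ^ q = a) :
    ∃ x : F, x ^ (q + 1) = a := by
  obtain ⟨m, hm⟩ := exists_pow_gen hg ha
  have h1 : a ^ (q - 1) = 1 := (pow_fix_iff hq ha).mp haq
  have h2 : (g : F) ^ (m * (q - 1)) = 1 := by rw [pow_mul, hm, h1]
  have h3 : (q ^ 2 - 1) ∣ m * (q - 1) := by
    rw [← gen_orderOf hcard hg]
    exact orderOf_dvd_of_pow_eq_one h2
  have h4 : (q + 1) * (q - 1) ∣ m * (q - 1) := by
    rwa [← sq_sub_one hq]
  have h5 : (q + 1) ∣ m := by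
    have hq1 : 0 < q - 1 := by omega
    exact (Nat.mul_dvd_mul_iff_right hq1).mp h4
  obtain ⟨j, hj⟩ := h5
  exact ⟨(g : F) ^ j, by rw [← pow_mul, mul_comm j, ← hj, hm]⟩

lemma norm_count (hq : 2 ≤ q) (hcard : Fintype.card F = q ^ 2)
    {g : Fˣ} (hg : ∀ x : Fˣ, x ∈ Subgroup.zpowers g)
    {a : F} (ha : a ≠ 0) (haq : a ^ q = a) :
    Nat.card {x : F // x ^ (q + 1) = a} = q + 1 := by
  have hprim : IsPrimitiveRoot ((g : F) ^ (q - 1)) (q + 1) :=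
    (gen_prim hcard hg).pow (sq_sub_one_pos hq) (by rw [sq_sub_one hq, mul_comm])
  exact card_pow_eq (by omega) hprim ha (exists_norm hq hcard hg ha haq)

lemma unit_count (hq : 2 ≤ q) (hcard : Fintype.card F = q ^ 2)
    {g : Fˣ} (hg : ∀ x : Fˣ, x ∈ Subgroup.zpowers g) :
    Nat.card {t : F // t ≠ 0 ∧ t ^ q = t} = q - 1 := by
  have hprim : IsPrimitiveRoot ((g : F) ^ (q + 1)) (q - 1) :=
    (gen_prim hcard hg).pow (sq_sub_one_pos hq) (sq_sub_one hq)
  have he : ∀ t : F, (t ≠ 0 ∧ t ^ q = t) ↔ t ^ (q - 1) = 1 := by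
    intro t
    constructor
    · rintro ⟨h0, hf⟩
      exact (pow_fix_iff hq h0).mp hf
    · intro h
      have h0 : t ≠ 0 := by
        rintro rfl
        rw [zero_pow (by omega : q - 1 ≠ 0)] at h
        exact zero_ne_one h
      exact ⟨h0, (pow_fix_iff hq h0).mpr h⟩
  rw [Nat.card_congr (Equiv.subtypeEquivRight he)]
  exact card_pow_eq (by omega) hprim one_ne_zero ⟨1, one_pow _⟩

lemma root_card_le (P : F[X]) (hP : P ≠ 0) :
    Nat.card {x : F // P.eval x = 0} ≤ P.natDegree := by
  classical
  have hset : {x : F | P.eval x = 0} = (P.roots.toFinset : Set F) := by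
    ext x
    simp [Multiset.mem_toFinset, mem_roots', hP, IsRoot]
  have h1 : Nat.card {x : F // P.eval x = 0} = Set.ncard {x : F | P.eval x = 0} :=
    Nat.card_coe_set_eq _
  rw [h1, hset, Set.ncard_coe_finset]
  exact le_trans (Multiset.toFinset_card_le _) (P.card_roots')

lemma ker_card (hq : 2 ≤ q) (hcard : Fintype.card F = q ^ 2)
    (hmul : ∀ x y : F, (x + y) ^ q = x ^ q + y ^ q) (hAA : ∀ x : F, (x ^ q) ^ q = x) :
    Nat.card {x : F // x + x ^ q = 0} = q := by
  classical
  set tr : F →+ F :=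
    { toFun := fun x => x + x ^ q
      map_zero' := by simp [zero_pow (by omega : q ≠ 0)]
      map_add' := fun x y => by
        show (x + y) + (x + y) ^ q = (x + x ^ q) + (y + y ^ q)
        rw [hmul]; ring } with htr
  have hK : Nat.card {x : F // x + x ^ q = 0} ≤ q := by
    have hmono : (X ^ q + X : F[X]).Monic :=
      monic_X_pow_add (degree_X_le.trans_lt (by exact_mod_cast by omega : (1 : WithBot ℕ) < q))
    have hdeg : (X ^ q + X : F[X]).natDegree = q := by
      compute_degree!
      · rw [if_neg (by omega : ¬(1 = q))]
        simp
      · omega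
    have hle := root_card_le (X ^ q + X : F[X]) hmono.ne_zero
    rw [hdeg] at hle
    refine le_trans (le_of_eq (Nat.card_congr (Equiv.subtypeEquivRight ?_))) hle
    intro x
    simp [add_comm]
  have hI : Nat.card {y : F // y ^ q = y} ≤ q := by
    have hmono : (X ^ q - X : F[X]).Monic := by
      have h : (X ^ q - X : F[X]) = X ^ q + (-X) := by ring
      rw [h]
      exact monic_X_pow_add (by
        rw [degree_neg]
        exact degree_X_le.trans_lt (by exact_mod_cast by omega : (1 : WithBot ℕ) < q))
    have hdeg : (X ^ q - X : F[X]).natDegree = q := by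
      compute_degree!
      · rw [if_neg (by omega : ¬(1 = q))]
        simp
      · omega
    have hle := root_card_le (X ^ q - X : F[X]) hmono.ne_zero
    rw [hdeg] at hle
    refine le_trans (le_of_eq (Nat.card_congr (Equiv.subtypeEquivRight ?_))) hle
    intro x
    simp [sub_eq_zero]
  have hrange : Nat.card tr.range ≤ q := by
    refine le_trans (Nat.card_le_card_of_injective
      (fun y : tr.range => (⟨y.1, ?_⟩ : {y : F // y ^ q = y}))
      (fun y z h => Subtype.ext (by simpa using congrArg Subtype.val h))) hI
    obtain ⟨x, hx⟩ := y.2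
    have hy : y.1 = x + x ^ q := hx.symm
    rw [hy, hmul, hAA]
    ring
  have hker : Nat.card tr.ker = Nat.card {x : F // x + x ^ q = 0} :=
    Nat.card_congr (Equiv.subtypeEquivRight (fun x => by
      simp [AddMonoidHom.mem_ker, htr]))
  have hiso : Nat.card F = Nat.card tr.range * Nat.card tr.ker := by
    rw [AddSubgroup.card_eq_card_quotient_mul_card_addSubgroup tr.ker]
    congr 1
    exact Nat.card_congr (QuotientAddGroup.quotientKerEquivRange tr).toEquiv
  have hqq : q * q = Nat.card tr.range * Nat.card tr.ker := by
    rw [← hiso, Nat.card_eq_fintype_card, hcard, sq]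
  rw [hker] at hqq
  have hge : q ≤ Nat.card {x : F // x + x ^ q = 0} := by
    refine Nat.le_of_mul_le_mul_left ?_ (by omega : 0 < q)
    calc q * q = Nat.card tr.range * Nat.card {x : F // x + x ^ q = 0} := hqq
    _ ≤ q * Nat.card {x : F // x + x ^ q = 0} := Nat.mul_le_mul_right _ hrange
  omega

lemma nonker_card (hq : 2 ≤ q) (hcard : Fintype.card F = q ^ 2)
    (hmul : ∀ x y : F, (x + y) ^ q = x ^ q + y ^ q) (hAA : ∀ x : F, (x ^ q) ^ q = x) :
    Nat.card {x : F // x + x ^ q ≠ 0} = q ^ 2 - q := by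
  classical
  have h1 := ker_card hq hcard hmul hAA
  rw [Nat.card_eq_fintype_card] at h1 ⊢
  rw [Fintype.card_subtype_compl, h1, hcard]


lemma neg_pow_q (hq : 2 ≤ q) (hmul : ∀ x y : F, (x + y) ^ q = x ^ q + y ^ q) (x : F) :
    (-x) ^ q = -(x ^ q) := by
  have h : (0 : F) ^ q = x ^ q + (-x) ^ q := by
    rw [← hmul]
    norm_num
  rw [zero_pow (by omega : q ≠ 0)] at h
  linear_combination -h

lemma trace_mul_fix (a t : F) (htq : t ^ q = t) :
    (a * t) + (a * t) ^ q = t * (a + a ^ q) := by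
  rw [mul_pow, htq]; ring

lemma trace_fix (hmul : ∀ x y : F, (x + y) ^ q = x ^ q + y ^ q)
    (hAA : ∀ x : F, (x ^ q) ^ q = x) (b : F) : (b + b ^ q) ^ q = b + b ^ q := by
  rw [hmul, hAA]; ring

lemma exists_c (hq : 2 ≤ q) (hcard : Fintype.card F = q ^ 2)
    (hmul : ∀ x y : F, (x + y) ^ q = x ^ q + y ^ q) (hAA : ∀ x : F, (x ^ q) ^ q = x)
    {g : Fˣ} (hg : ∀ x : Fˣ, x ∈ Subgroup.zpowers g)
    {b : F} (hb : b + b ^ q ≠ 0) : ∃ c : F, b + b ^ q + c * c ^ q = 0 := by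
  obtain ⟨x, hx⟩ := exists_norm hq hcard hg (a := -(b + b ^ q)) (neg_ne_zero.mpr hb)
    (by rw [neg_pow_q hq hmul, trace_fix hmul hAA])
  refine ⟨x, ?_⟩
  have h2 : x * x ^ q = -(b + b ^ q) := by rw [mul_comm, ← pow_succ, hx]
  rw [h2]; ring

lemma class_card (hq : 2 ≤ q) (hcard : Fintype.card F = q ^ 2)
    (hmul : ∀ x y : F, (x + y) ^ q = x ^ q + y ^ q) (hAA : ∀ x : F, (x ^ q) ^ q = x)
    {g : Fˣ} (hg : ∀ x : Fˣ, x ∈ Subgroup.zpowers g) (a c : F)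
    (h0 : a + a ^ q + c * c ^ q = 0) (hne : a + a ^ q ≠ 0) :
    Nat.card {p' : F × F //
        (p'.1 + p'.1 ^ q + p'.2 * p'.2 ^ q = 0 ∧ p'.1 + p'.1 ^ q ≠ 0) ∧
        ∃ t : F, t ≠ 0 ∧ t ^ q = t ∧ p'.1 = a * t} = q ^ 2 - 1 := by
  classical
  have ha0 : a ≠ 0 := by
    rintro rfl
    exact hne (by rw [zero_pow (by omega : q ≠ 0), add_zero])
  set T := {t : F // t ≠ 0 ∧ t ^ q = t} with hT
  set S := {p' : F × F //
        (p'.1 + p'.1 ^ q + p'.2 * p'.2 ^ q = 0 ∧ p'.1 + p'.1 ^ q ≠ 0) ∧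
        ∃ t : F, t ≠ 0 ∧ t ^ q = t ∧ p'.1 = a * t} with hS
  have hfiber : ∀ t : T, Nat.card {c' : F // c' * c' ^ q = -(t.1 * (a + a ^ q))} = q + 1 := by
    intro t
    have heq : ∀ c' : F,
        (c' * c' ^ q = -(t.1 * (a + a ^ q))) ↔ c' ^ (q + 1) = -(t.1 * (a + a ^ q)) := by
      intro c'
      rw [pow_succ, mul_comm]
    rw [Nat.card_congr (Equiv.subtypeEquivRight heq)]
    refine norm_count hq hcard hg (neg_ne_zero.mpr (mul_ne_zero t.2.1 hne)) ?_
    rw [neg_pow_q hq hmul, mul_pow, t.2.2, trace_fix hmul hAA]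
  -- the bijection from the sigma type to S
  set f : (Σ t : T, {c' : F // c' * c' ^ q = -(t.1 * (a + a ^ q))}) → S :=
    fun x => ⟨(a * x.1.1, x.2.1), by
      constructor
      · constructor
        · rw [trace_mul_fix a x.1.1 x.1.2.2, x.2.2]
          ring
        · rw [trace_mul_fix a x.1.1 x.1.2.2]
          exact mul_ne_zero x.1.2.1 hne
      · exact ⟨x.1.1, x.1.2.1, x.1.2.2, rfl⟩⟩ with hf
  have hbij : Function.Bijective f := by
    constructor
    · rintro ⟨t, c'⟩ ⟨t', c''⟩ h
      have h1 : a * t.1 = a * t'.1 := congrArg (fun z => z.1.1) h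
      have h2 : c'.1 = c''.1 := congrArg (fun z => z.1.2) h
      have ht : t = t' := Subtype.ext (mul_left_cancel₀ ha0 h1)
      subst ht
      exact congrArg (Sigma.mk t) (Subtype.ext h2)
    · rintro ⟨⟨b', c'⟩, ⟨⟨h1, h2⟩, t, ht0, htq, hb⟩⟩
      have hc : c' * c' ^ q = -(t * (a + a ^ q)) := by
        rw [hb, trace_mul_fix a t htq] at h1
        have h1' : t * (a + a ^ q) + c' * c' ^ q = 0 := h1
        linear_combination h1'
      exact ⟨⟨⟨t, ht0, htq⟩, ⟨c', hc⟩⟩, Subtype.ext (Prod.ext hb.symm rfl)⟩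
  letI : Fintype T := Fintype.ofFinite _
  letI : ∀ t : T, Fintype {c' : F // c' * c' ^ q = -(t.1 * (a + a ^ q))} :=
    fun t => Fintype.ofFinite _
  have hcount : Nat.card S = Nat.card T * (q + 1) := by
    rw [← Nat.card_eq_of_bijective f hbij, Nat.card_eq_fintype_card, Fintype.card_sigma]
    have : ∀ t : T, Fintype.card {c' : F // c' * c' ^ q = -(t.1 * (a + a ^ q))} = q + 1 := by
      intro t
      rw [← Nat.card_eq_fintype_card]
      exact hfiber t
    rw [Finset.sum_congr rfl (fun t _ => this t), Finset.sum_const, Finset.card_univ,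
      smul_eq_mul, Nat.card_eq_fintype_card]
  rw [hcount, hT, unit_count hq hcard hg, sq_sub_one hq, mul_comm]

lemma class_shift (hq : 2 ≤ q) {b t : F} (ht0 : t ≠ 0) (htq : t ^ q = t) :
    {p' : F × F | (p'.1 + p'.1 ^ q + p'.2 * p'.2 ^ q = 0 ∧ p'.1 + p'.1 ^ q ≠ 0) ∧
        ∃ t' : F, t' ≠ 0 ∧ t' ^ q = t' ∧ p'.1 = (b * t) * t'}
      = {p' : F × F | (p'.1 + p'.1 ^ q + p'.2 * p'.2 ^ q = 0 ∧ p'.1 + p'.1 ^ q ≠ 0) ∧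
        ∃ t' : F, t' ≠ 0 ∧ t' ^ q = t' ∧ p'.1 = b * t'} := by
  ext p'
  constructor
  · rintro ⟨hc, t', h1, h2, h3⟩
    exact ⟨hc, t * t', mul_ne_zero ht0 h1, by rw [mul_pow, htq, h2], by rw [h3]; ring⟩
  · rintro ⟨hc, t', h1, h2, h3⟩
    refine ⟨hc, t⁻¹ * t', mul_ne_zero (inv_ne_zero ht0) h1, ?_, ?_⟩
    · rw [mul_pow, inv_pow, htq, h2]
    · rw [h3]
      field_simp

lemma num_classes (hq : 2 ≤ q) (hcard : Fintype.card F = q ^ 2)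
    (hmul : ∀ x y : F, (x + y) ^ q = x ^ q + y ^ q) (hAA : ∀ x : F, (x ^ q) ^ q = x)
    {g : Fˣ} (hg : ∀ x : Fˣ, x ∈ Subgroup.zpowers g) :
    Nat.card {s : Set (F × F) // ∃ p : F × F,
        (p.1 + p.1 ^ q + p.2 * p.2 ^ q = 0 ∧ p.1 + p.1 ^ q ≠ 0) ∧
        s = {p' : F × F |
          (p'.1 + p'.1 ^ q + p'.2 * p'.2 ^ q = 0 ∧ p'.1 + p'.1 ^ q ≠ 0) ∧
          ∃ t : F, t ≠ 0 ∧ t ^ q = t ∧ p'.1 = p.1 * t}} = q := by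
  classical
  set cls : F → Set (F × F) := fun b =>
    {p' : F × F | (p'.1 + p'.1 ^ q + p'.2 * p'.2 ^ q = 0 ∧ p'.1 + p'.1 ^ q ≠ 0) ∧
      ∃ t : F, t ≠ 0 ∧ t ^ q = t ∧ p'.1 = b * t} with hcls
  set D := {b : F // b + b ^ q ≠ 0} with hD
  set C := {s : Set (F × F) // ∃ p : F × F,
        (p.1 + p.1 ^ q + p.2 * p.2 ^ q = 0 ∧ p.1 + p.1 ^ q ≠ 0) ∧ s = cls p.1} with hC
  set gm : D → C := fun b =>
    ⟨cls b.1, (b.1, Classical.choose (exists_c hq hcard hmul hAA hg b.2)),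
      ⟨Classical.choose_spec (exists_c hq hcard hmul hAA hg b.2), b.2⟩, rfl⟩ with hgm
  have hsurj : Function.Surjective gm := by
    rintro ⟨s, p, hp, rfl⟩
    exact ⟨⟨p.1, hp.2⟩, Subtype.ext rfl⟩
  have hmem : ∀ b : D, ((b.1, Classical.choose (exists_c hq hcard hmul hAA hg b.2)) : F × F)
      ∈ cls b.1 := by
    intro b
    exact ⟨⟨Classical.choose_spec (exists_c hq hcard hmul hAA hg b.2), b.2⟩,
      1, one_ne_zero, one_pow q, (mul_one _).symm⟩
  have hfiber : ∀ s : C, Nat.card {b : D // gm b = s} = q - 1 := by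
    intro s
    obtain ⟨b₀, hb₀⟩ := hsurj s
    have hb₀0 : b₀.1 ≠ 0 := by
      intro h
      exact b₀.2 (by rw [h, zero_pow (by omega : q ≠ 0), add_zero])
    set m : {t : F // t ≠ 0 ∧ t ^ q = t} → {b : D // gm b = s} := fun t =>
      ⟨⟨b₀.1 * t.1, by
          rw [trace_mul_fix b₀.1 t.1 t.2.2]
          exact mul_ne_zero t.2.1 b₀.2⟩, by
        refine Subtype.ext ?_
        show cls (b₀.1 * t.1) = s.1
        have hs : s.1 = cls b₀.1 := congrArg Subtype.val hb₀.symm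
        rw [hs]
        exact class_shift hq t.2.1 t.2.2⟩ with hm
    have hbij : Function.Bijective m := by
      constructor
      · intro t t' h
        have h1 : b₀.1 * t.1 = b₀.1 * t'.1 := congrArg (fun z => z.1.1) h
        exact Subtype.ext (mul_left_cancel₀ hb₀0 h1)
      · rintro ⟨b, hb⟩
        have hcl : cls b.1 = cls b₀.1 := by
          have h1 : (gm b).1 = (gm b₀).1 := by rw [hb, hb₀]
          exact h1
        have h2 := hmem b
        rw [hcl] at h2
        obtain ⟨_, t, ht0, htq, hbt⟩ := h2
        exact ⟨⟨t, ht0, htq⟩, Subtype.ext (Subtype.ext hbt.symm)⟩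
    have := Nat.card_eq_of_bijective m hbij
    rw [← this, unit_count hq hcard hg]
  letI : Fintype C := Fintype.ofFinite _
  letI : Fintype D := Fintype.ofFinite _
  letI : ∀ s : C, Fintype {b : D // gm b = s} := fun s => Fintype.ofFinite _
  have htot : Fintype.card D = Fintype.card C * (q - 1) := by
    rw [← Fintype.card_congr (Equiv.sigmaFiberEquiv gm), Fintype.card_sigma]
    have h3 : ∀ s : C, Fintype.card {b : D // gm b = s} = q - 1 := by
      intro s
      rw [← Nat.card_eq_fintype_card]
      exact hfiber s
    rw [Finset.sum_congr rfl (fun s _ => h3 s), Finset.sum_const, Finset.card_univ, smul_eq_mul]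
  have hDcard : Fintype.card D = q ^ 2 - q := by
    rw [← Nat.card_eq_fintype_card]
    exact nonker_card hq hcard hmul hAA
  have hqq : q ^ 2 - q = q * (q - 1) := by
    cases' Nat.exists_eq_add_of_le hq with r hr
    subst hr
    have e1 : (2 + r) ^ 2 = r ^ 2 + 4 * r + 4 := by ring
    have e2 : 2 + r - 1 = r + 1 := by omega
    rw [e2]
    have e3 : (2 + r) * (r + 1) = r ^ 2 + 3 * r + 2 := by ring
    omega
  have hC' : Fintype.card C * (q - 1) = q * (q - 1) := by
    rw [← htot, hDcard, hqq]
  have : Fintype.card C = q := Nat.eq_of_mul_eq_mul_right (by omega : 0 < q - 1) hC'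
  rw [Nat.card_eq_fintype_card]
  exact this

end OmegaAux

/-- Partition `Ω' = {(b,c) : b + b^q + c c^q = 0 ≠ b + b^q}` by the relation
`(b,c) ∼ (b₁,c₁) ↔ b F_0^× = b₁ F_0^×`. Each equivalence class has exactly
`q^2 - 1` elements and there are exactly `q` classes. -/
theorem Omega_prime_classes (q : ℕ) (hq : IsPrimePow q)
    (F : Type*) [Field F] [Fintype F] (hF : Fintype.card F = q ^ 2) :
    (∀ p : F × F,
      p.1 + p.1 ^ q + p.2 * p.2 ^ q = 0 → p.1 + p.1 ^ q ≠ 0 →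
      Nat.card {p' : F × F //
          (p'.1 + p'.1 ^ q + p'.2 * p'.2 ^ q = 0 ∧ p'.1 + p'.1 ^ q ≠ 0) ∧
          ∃ t : F, t ≠ 0 ∧ t ^ q = t ∧ p'.1 = p.1 * t} = q ^ 2 - 1) ∧
    Nat.card {s : Set (F × F) // ∃ p : F × F,
        (p.1 + p.1 ^ q + p.2 * p.2 ^ q = 0 ∧ p.1 + p.1 ^ q ≠ 0) ∧
        s = {p' : F × F |
          (p'.1 + p'.1 ^ q + p'.2 * p'.2 ^ q = 0 ∧ p'.1 + p'.1 ^ q ≠ 0) ∧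
          ∃ t : F, t ≠ 0 ∧ t ^ q = t ∧ p'.1 = p.1 * t}} = q := by
  obtain ⟨pc, k, hpc, hk, hpk⟩ := hq
  have hpc' : pc.Prime := Nat.prime_iff.mpr hpc
  have hq2 : 2 ≤ q := by
    have h1 : 1 < pc ^ k := Nat.one_lt_pow (by omega) hpc'.two_le
    omega
  have hrp : ringChar F = pc := by
    obtain ⟨n, hn, hFn⟩ := FiniteField.card F (ringChar F)
    have h1 : ringChar F ∣ pc ^ (k * 2) := by
      rw [pow_mul, hpk, ← hF, hFn]
      exact dvd_pow_self _ (by positivity)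
    exact ((Nat.prime_dvd_prime_iff_eq hn hpc').mp (hn.dvd_of_dvd_pow h1))
  haveI hchar : CharP F pc := hrp ▸ ringChar.charP F
  haveI : Fact pc.Prime := ⟨hpc'⟩
  have hmul : ∀ x y : F, (x + y) ^ q = x ^ q + y ^ q := by
    intro x y
    rw [← hpk]
    exact add_pow_char_pow (R := F) (x := x) (y := y) pc k
  have hAA : ∀ x : F, (x ^ q) ^ q = x := by
    intro x
    rw [← pow_mul]
    have h1 : q * q = q ^ 2 := (sq q).symm
    rw [h1, ← hF]
    exact FiniteField.pow_card x
  obtain ⟨g, hg⟩ := IsCyclic.exists_generator (α := Fˣ)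
  constructor
  · intro p hp0 hpne
    exact OmegaAux.class_card hq2 hF hmul hAA hg p.1 p.2 hp0 hpne
  · exact OmegaAux.num_classes hq2 hF hmul hAA hg
end

section
/- Let q be a prime power, F = GF(q^2), F_0 = GF(q). Fix a ∈ F^× with a + a^q = 0, and fix b, c ∈ F with b + b^q + c·c^q = 0 and b + b^q ≠ 0, and fix b_i, b_j ∈ F^× such that b_j(b^q + a)^{-1} ∈ F_0^× and b_i·b·(b^q + a)·a^{-1} ∈ F_0^×. Then the set of pairs (d, e) with d ∈ b·F_0^×, d + d^q + e·e^q = 0, b_j(d^q + a)^{-1} ∈ F_0^×, and b_i·d·(d^q + a)·a^{-1} ∈ F_0^× has exactly q + 1 elements, namely the pairs (b, e) with e·e^q = c·c^q. -/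
/-- The counting step for the intersection number `p_{ijk}^4 = q + 1`: under
the stated conditions, the set of pairs `(d, e)` with `d ∈ b F_0^×`,
`d + d^q + e e^q = 0`, `b_j (d^q + a)⁻¹ ∈ F_0^×`, and
`b_i d (d^q + a) a⁻¹ ∈ F_0^×` equals `{(b, e) : e e^q = c c^q}` and has
exactly `q + 1` elements. -/
theorem intersection_number_count (q : ℕ) (hq : IsPrimePow q)
    (F : Type*) [Field F] [Fintype F] (hF : Fintype.card F = q ^ 2)
    (a b c bi bj : F) (ha0 : a ≠ 0) (ha : a + a ^ q = 0)
    (hbc : b + b ^ q + c * c ^ q = 0) (hb : b + b ^ q ≠ 0)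
    (hbi : bi ≠ 0) (hbj : bj ≠ 0)
    (hj : bj * (b ^ q + a)⁻¹ ≠ 0 ∧
      (bj * (b ^ q + a)⁻¹) ^ q = bj * (b ^ q + a)⁻¹)
    (hi : bi * b * (b ^ q + a) * a⁻¹ ≠ 0 ∧
      (bi * b * (b ^ q + a) * a⁻¹) ^ q = bi * b * (b ^ q + a) * a⁻¹) :
    {p : F × F | (∃ y : F, y ≠ 0 ∧ y ^ q = y ∧ p.1 = b * y) ∧
        p.1 + p.1 ^ q + p.2 * p.2 ^ q = 0 ∧
        (bj * (p.1 ^ q + a)⁻¹ ≠ 0 ∧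
          (bj * (p.1 ^ q + a)⁻¹) ^ q = bj * (p.1 ^ q + a)⁻¹) ∧
        (bi * p.1 * (p.1 ^ q + a) * a⁻¹ ≠ 0 ∧
          (bi * p.1 * (p.1 ^ q + a) * a⁻¹) ^ q =
            bi * p.1 * (p.1 ^ q + a) * a⁻¹)} =
      {p : F × F | p.1 = b ∧ p.2 * p.2 ^ q = c * c ^ q} ∧
    Nat.card {p : F × F // (∃ y : F, y ≠ 0 ∧ y ^ q = y ∧ p.1 = b * y) ∧
        p.1 + p.1 ^ q + p.2 * p.2 ^ q = 0 ∧
        (bj * (p.1 ^ q + a)⁻¹ ≠ 0 ∧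
          (bj * (p.1 ^ q + a)⁻¹) ^ q = bj * (p.1 ^ q + a)⁻¹) ∧
        (bi * p.1 * (p.1 ^ q + a) * a⁻¹ ≠ 0 ∧
          (bi * p.1 * (p.1 ^ q + a) * a⁻¹) ^ q =
            bi * p.1 * (p.1 ^ q + a) * a⁻¹)} = q + 1 := by
  -- basic facts about q and the characteristic
  classical
  obtain ⟨p, n, hp, hn, hqpn⟩ := hq
  have hp' : p.Prime := hp.nat_prime
  haveI : Fact p.Prime := ⟨hp'⟩
  have hq2 : 2 ≤ q := by
    subst hqpn
    calc 2 ≤ p := hp'.two_le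
    _ ≤ p ^ n := Nat.le_self_pow hn.ne' p
  -- the characteristic of F is p
  have hrc : ringChar F = p := by
    have h1 : (ringChar F).Prime := CharP.char_is_prime F (ringChar F)
    haveI : Fact (ringChar F).Prime := ⟨h1⟩
    obtain ⟨m, hm⟩ := FiniteField.card F (ringChar F)
    have hdvd : p ∣ ringChar F ^ (m : ℕ) := by
      rw [← hm.2, hF, ← hqpn, ← pow_mul]
      exact dvd_pow_self p (by positivity)
    exact ((Nat.prime_dvd_prime_iff_eq hp' h1).mp (hp'.dvd_of_dvd_pow hdvd)).symm
  haveI : CharP F p := hrc ▸ ringChar.charP F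
  haveI : ExpChar F p := ExpChar.prime hp'
  have hadd : ∀ x y : F, (x + y) ^ q = x ^ q + y ^ q := by
    intro x y
    rw [← hqpn]
    exact add_pow_char_pow x y p n
  have hqq : ∀ x : F, (x ^ q) ^ q = x := by
    intro x
    rw [← pow_mul, ← sq, ← hF, FiniteField.pow_card]
  have haq : a ^ q = -a := by linear_combination ha
  -- basic nonvanishing
  have hbne : b ≠ 0 := by
    intro h
    apply hb
    rw [h, zero_pow, add_zero]
    · omega
  have hcne : c ≠ 0 := by
    intro h
    apply hb
    rw [h, zero_mul] at hbc
    linear_combination hbc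
  have hv : b ^ q + a ≠ 0 := by
    intro h
    apply hj.1
    rw [h, inv_zero, mul_zero]
  have hvq : (b ^ q + a) ^ q = b - a := by
    rw [hadd, hqq, haq]; ring
  -- the set equality
  have hset : {p : F × F | (∃ y : F, y ≠ 0 ∧ y ^ q = y ∧ p.1 = b * y) ∧
        p.1 + p.1 ^ q + p.2 * p.2 ^ q = 0 ∧
        (bj * (p.1 ^ q + a)⁻¹ ≠ 0 ∧
          (bj * (p.1 ^ q + a)⁻¹) ^ q = bj * (p.1 ^ q + a)⁻¹) ∧
        (bi * p.1 * (p.1 ^ q + a) * a⁻¹ ≠ 0 ∧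
          (bi * p.1 * (p.1 ^ q + a) * a⁻¹) ^ q =
            bi * p.1 * (p.1 ^ q + a) * a⁻¹)} =
      {p : F × F | p.1 = b ∧ p.2 * p.2 ^ q = c * c ^ q} := by
    ext ⟨d, e⟩
    simp only [Set.mem_setOf_eq]
    constructor
    · rintro ⟨⟨y, hy0, hyq, rfl⟩, heq, ⟨hj1, hj2⟩, -⟩
      have hdq : (b * y) ^ q = b ^ q * y := by rw [mul_pow, hyq]
      have hu : b ^ q * y + a ≠ 0 := by
        intro h
        apply hj1
        rw [hdq, h, inv_zero, mul_zero]
      have huq : (b ^ q * y + a) ^ q = b * y - a := by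
        rw [hadd, mul_pow, hqq, hyq, haq]; ring
      rw [hdq] at hj1 hj2
      have huqne : (b ^ q * y + a) ^ q ≠ 0 := pow_ne_zero _ hu
      have hvqne : (b ^ q + a) ^ q ≠ 0 := pow_ne_zero _ hv
      -- fixed-point equations
      have e1 : bj ^ q * (b ^ q * y + a) = bj * (b ^ q * y + a) ^ q := by
        have h := hj2
        rw [mul_pow, inv_pow] at h
        field_simp at h
        linear_combination h
      have e2 : bj ^ q * (b ^ q + a) = bj * (b ^ q + a) ^ q := by
        have h := hj.2
        rw [mul_pow, inv_pow] at h
        field_simp at h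
        linear_combination h
      have eqn : (b ^ q * y + a) ^ q * (b ^ q + a) =
          (b ^ q + a) ^ q * (b ^ q * y + a) := by
        apply mul_left_cancel₀ hbj
        linear_combination (b ^ q * y + a) * e2 - (b ^ q + a) * e1
      rw [huq, hvq] at eqn
      have key : a * (b + b ^ q) * (y - 1) = 0 := by linear_combination eqn
      have hy1 : y = 1 := by
        rcases mul_eq_zero.mp key with h | h
        · rcases mul_eq_zero.mp h with h' | h'
          · exact absurd h' ha0
          · exact absurd h' hb
        · linear_combination h
      subst hy1
      rw [mul_one] at heq ⊢
      exact ⟨rfl, by linear_combination heq - hbc⟩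
    · rintro ⟨rfl, he⟩
      refine ⟨⟨1, one_ne_zero, one_pow q, (mul_one _).symm⟩,
        by linear_combination hbc + he, hj, hi⟩
  refine ⟨hset, ?_⟩
  -- a primitive (q+1)-st root of unity
  have hfact : q ^ 2 - 1 = (q - 1) * (q + 1) := by
    obtain ⟨m, rfl⟩ : ∃ m, q = m + 2 := ⟨q - 2, by omega⟩
    show (m + 2) ^ 2 - 1 = (m + 1) * (m + 3)
    have h1 : (m + 2) ^ 2 = (m + 1) * (m + 3) + 1 := by ring
    exact Nat.sub_eq_of_eq_add h1
  have hdvd : q - 1 ∣ q ^ 2 - 1 := ⟨q + 1, hfact⟩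
  obtain ⟨g, hg⟩ := IsCyclic.exists_ofOrder_eq_natCard (α := Fˣ)
  have hgo : orderOf g = q ^ 2 - 1 := by
    rw [hg, Nat.card_eq_fintype_card, Fintype.card_units, hF]
  have hzo : orderOf (g ^ (q - 1)) = q + 1 := by
    rw [orderOf_pow, hgo, Nat.gcd_eq_right hdvd, hfact,
      Nat.mul_div_cancel_left _ (by omega : 0 < q - 1)]
  have hζu : IsPrimitiveRoot (g ^ (q - 1)) (q + 1) := hzo ▸ IsPrimitiveRoot.orderOf _
  have hζ : IsPrimitiveRoot ((g ^ (q - 1) : Fˣ) : F) (q + 1) :=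
    IsPrimitiveRoot.coe_units_iff.mpr hζu
  -- the equivalences
  have e1 : {p : F × F // p.1 = b ∧ p.2 * p.2 ^ q = c * c ^ q} ≃
      {e : F // e ^ (q + 1) = c ^ (q + 1)} :=
    { toFun := fun x => ⟨x.1.2, by
        rw [pow_succ' _ q, pow_succ' _ q]; exact x.2.2⟩
      invFun := fun e => ⟨(b, e.1), rfl, by
        show e.1 * e.1 ^ q = c * c ^ q
        rw [← pow_succ' _ q, ← pow_succ' _ q]; exact e.2⟩
      left_inv := fun x => Subtype.ext (Prod.ext x.2.1.symm rfl)
      right_inv := fun e => rfl }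
  have e2 : {e : F // e ^ (q + 1) = c ^ (q + 1)} ≃ {u : F // u ^ (q + 1) = 1} :=
    { toFun := fun e => ⟨e.1 * c⁻¹, by
        rw [mul_pow, e.2, inv_pow, mul_inv_cancel₀ (pow_ne_zero _ hcne)]⟩
      invFun := fun u => ⟨u.1 * c, by rw [mul_pow, u.2, one_mul]⟩
      left_inv := fun e => Subtype.ext (by
        simp [mul_assoc, inv_mul_cancel₀ hcne])
      right_inv := fun u => Subtype.ext (by
        simp [mul_assoc, mul_inv_cancel₀ hcne]) }
  have e3 : {u : F // u ^ (q + 1) = 1} ≃ (Polynomial.nthRootsFinset (q + 1) (1 : F)) :=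
    Equiv.subtypeEquivRight fun u => by
      rw [Polynomial.mem_nthRootsFinset (Nat.succ_pos q) (1 : F)]
  calc Nat.card {p : F × F // (∃ y : F, y ≠ 0 ∧ y ^ q = y ∧ p.1 = b * y) ∧
        p.1 + p.1 ^ q + p.2 * p.2 ^ q = 0 ∧
        (bj * (p.1 ^ q + a)⁻¹ ≠ 0 ∧
          (bj * (p.1 ^ q + a)⁻¹) ^ q = bj * (p.1 ^ q + a)⁻¹) ∧
        (bi * p.1 * (p.1 ^ q + a) * a⁻¹ ≠ 0 ∧
          (bi * p.1 * (p.1 ^ q + a) * a⁻¹) ^ q =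
            bi * p.1 * (p.1 ^ q + a) * a⁻¹)}
      = Nat.card (Polynomial.nthRootsFinset (q + 1) (1 : F)) :=
        Nat.card_congr (((Equiv.setCongr hset).trans e1).trans (e2.trans e3))
    _ = (Polynomial.nthRootsFinset (q + 1) (1 : F)).card := Nat.card_eq_finsetCard _
    _ = q + 1 := hζ.card_nthRootsFinset
end
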